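/- arXiv:1605.03881 — 5 statements merged into one kernel-verified Lean document; each statement's English description precedes it below -/
import Mathlib

section
/- There exist a unique Φ ∈ K and a unique Θ ∈ ℝ^n solving the algebraic multi-phase Penrose–Fife saddle point problem, i.e. satisfying ⟨AΦ + BᵀΘ − F, V − Φ⟩ ≥ 0 for all V ∈ K together with BΦ − CΘ = G. -/
open scoped RealInnerProductSpace

variable {E : Type*} [NormedAddCommGroup E] [InnerProductSpace ℝ E]
  [FiniteDimensional ℝ E]

/-- Existence and uniqueness for the variational inequality with a symmetric
positive definite operator on a nonempty closed convex set, in finite dimension. -/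
lemma vi_existsUnique [Nontrivial E]
    (M : E →L[ℝ] E) (hsym : ∀ x y : E, ⟪M x, y⟫ = ⟪x, M y⟫)
    (hpos : ∀ x : E, x ≠ 0 → 0 < ⟪M x, x⟫) (f : E)
    (K : Set E) (hKne : K.Nonempty) (hKcl : IsClosed K) (hKco : Convex ℝ K) :
    ∃! Φ : E, Φ ∈ K ∧ ∀ V ∈ K, 0 ≤ ⟪M Φ, V - Φ⟫ - ⟪f, V - Φ⟫ := by
  obtain ⟨x0, hx0⟩ := hKne
  -- coercivity constant
  have hsphne : (Metric.sphere (0:E) 1).Nonempty :=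
    NormedSpace.sphere_nonempty.mpr zero_le_one
  have hMc : Continuous fun x : E => ⟪M x, x⟫ :=
    (M.continuous).inner continuous_id
  obtain ⟨xs, hxs, hxsmin⟩ :=
    (isCompact_sphere (0:E) 1).exists_isMinOn hsphne hMc.continuousOn
  set α : ℝ := ⟪M xs, xs⟫ with hα_def
  have hxs1 : ‖xs‖ = 1 := by simpa using hxs
  have hα : 0 < α := hpos xs (by intro h; rw [h] at hxs1; simp at hxs1)
  have hcoer : ∀ x : E, α * ‖x‖ ^ 2 ≤ ⟪M x, x⟫ := by
    intro x
    rcases eq_or_ne x 0 with rfl | hx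
    · simp
    · have hnx : (0:ℝ) < ‖x‖ := norm_pos_iff.mpr hx
      have hu : (‖x‖⁻¹ • x) ∈ Metric.sphere (0:E) 1 := by
        simp [norm_smul, abs_of_pos (inv_pos.mpr hnx), inv_mul_cancel₀ hnx.ne']
      have h1 : ⟪M xs, xs⟫ ≤ ⟪M (‖x‖⁻¹ • x), ‖x‖⁻¹ • x⟫ := hxsmin hu
      have h2 : ⟪M (‖x‖⁻¹ • x), ‖x‖⁻¹ • x⟫ = ‖x‖⁻¹ * (‖x‖⁻¹ * ⟪M x, x⟫) := by
        rw [map_smul, real_inner_smul_left, real_inner_smul_right]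
      rw [h2] at h1
      have := mul_le_mul_of_nonneg_left h1 (le_of_lt (mul_pos hnx hnx))
      calc α * ‖x‖ ^ 2 = ‖x‖ * ‖x‖ * α := by ring
        _ ≤ ‖x‖ * ‖x‖ * (‖x‖⁻¹ * (‖x‖⁻¹ * ⟪M x, x⟫)) := this
        _ = ⟪M x, x⟫ := by field_simp
  -- the quadratic functional
  set J : E → ℝ := fun x => ⟪M x, x⟫ / 2 - ⟪f, x⟫ with hJ_def
  have hJc : Continuous J := by
    apply Continuous.sub (hMc.div_const 2)
    exact continuous_const.inner continuous_id
  have hJlb : ∀ x : E, α / 2 * ‖x‖ ^ 2 - ‖f‖ * ‖x‖ ≤ J x := by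
    intro x
    have h1 := hcoer x
    have h2 : ⟪f, x⟫ ≤ ‖f‖ * ‖x‖ := real_inner_le_norm f x
    simp only [hJ_def]; linarith
  -- radius
  set R : ℝ := ‖x0‖ + 2 * (‖f‖ + |J x0| + 1) / α + 1 with hR_def
  have hRx0 : ‖x0‖ ≤ R := by
    have : 0 < 2 * (‖f‖ + |J x0| + 1) / α := by
      apply div_pos _ hα
      nlinarith [norm_nonneg f, abs_nonneg (J x0)]
    simp only [hR_def]; linarith
  have hRbig : ∀ x : E, R < ‖x‖ → J x0 < J x := by
    intro x hx
    have h1 := hJlb x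
    have hr1 : 1 ≤ ‖x‖ := by
      have : 0 ≤ 2 * (‖f‖ + |J x0| + 1) / α := by positivity
      have := norm_nonneg x0
      simp only [hR_def] at hx; linarith
    have hr2 : 2 * (‖f‖ + |J x0| + 1) < α * ‖x‖ := by
      have : 2 * (‖f‖ + |J x0| + 1) / α < ‖x‖ := by
        have := norm_nonneg x0
        simp only [hR_def] at hx; linarith
      calc 2 * (‖f‖ + |J x0| + 1) = 2 * (‖f‖ + |J x0| + 1) / α * α := by
            field_simp
        _ < ‖x‖ * α := by exact mul_lt_mul_of_pos_right this hα
        _ = α * ‖x‖ := by ring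
    have hJx0 : J x0 ≤ |J x0| := le_abs_self _
    have hsq : ‖x‖ ^ 2 = ‖x‖ * ‖x‖ := sq ‖x‖
    have hp1 : 2 * (‖f‖ + |J x0| + 1) * ‖x‖ < α * ‖x‖ * ‖x‖ :=
      mul_lt_mul_of_pos_right hr2 (lt_of_lt_of_le one_pos hr1)
    have hp2 : (0:ℝ) ≤ (|J x0| + 1) * (‖x‖ - 1) :=
      mul_nonneg (by positivity) (by linarith)
    clear_value α J R
    nlinarith [h1, hp1, hp2, hJx0]
  -- minimize on compact set
  have hScomp : IsCompact (K ∩ Metric.closedBall (0:E) R) :=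
    (isCompact_closedBall (0:E) R).inter_left hKcl
  have hSne : (K ∩ Metric.closedBall (0:E) R).Nonempty :=
    ⟨x0, hx0, by simpa [Metric.mem_closedBall, dist_zero_right] using hRx0⟩
  obtain ⟨Φ, hΦS, hΦmin⟩ := hScomp.exists_isMinOn hSne hJc.continuousOn
  have hΦK : Φ ∈ K := hΦS.1
  have hmin : ∀ x ∈ K, J Φ ≤ J x := by
    intro x hxK
    rcases le_or_gt ‖x‖ R with h | h
    · exact hΦmin ⟨hxK, by simpa [Metric.mem_closedBall, dist_zero_right] using h⟩
    · have : J Φ ≤ J x0 := hΦmin ⟨hx0, by simpa [Metric.mem_closedBall, dist_zero_right] using hRx0⟩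
      exact le_of_lt (lt_of_le_of_lt this (hRbig x h))
  -- derive the variational inequality
  have hVI : ∀ V ∈ K, 0 ≤ ⟪M Φ, V - Φ⟫ - ⟪f, V - Φ⟫ := by
    intro V hV
    set d : E := V - Φ with hd_def
    set g : ℝ := ⟪M Φ, d⟫ - ⟪f, d⟫ with hg_def
    set h : ℝ := ⟪M d, d⟫ / 2 with hh_def
    have hh0 : 0 ≤ h := by
      rcases eq_or_ne d 0 with h0 | h0
      · simp [hh_def, h0]
      · exact le_of_lt (by simpa [hh_def] using half_pos (hpos d h0))
    have hexpand : ∀ t : ℝ, J (Φ + t • d) = J Φ + t * g + t ^ 2 * h := by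
      intro t
      have hM : M (Φ + t • d) = M Φ + t • M d := by
        rw [map_add, map_smul]
      have hcomm : ⟪M d, Φ⟫ = ⟪M Φ, d⟫ := by
        rw [hsym d Φ, real_inner_comm]
      simp only [hJ_def, hM, inner_add_left, inner_add_right, real_inner_smul_left,
        real_inner_smul_right, hg_def, hh_def, hcomm]
      ring
    have key : ∀ t : ℝ, 0 < t → t ≤ 1 → 0 ≤ g + t * h := by
      intro t ht0 ht1
      have hmem : Φ + t • d ∈ K := by
        have := hKco hΦK hV (by linarith : (0:ℝ) ≤ 1 - t) (le_of_lt ht0) (by ring)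
        have heq : (1 - t) • Φ + t • V = Φ + t • d := by
          simp only [hd_def, smul_sub, sub_smul, one_smul]; abel
        rwa [heq] at this
      have := hmin _ hmem
      rw [hexpand t] at this
      have h2 : 0 ≤ t * g + t ^ 2 * h := by linarith
      have h3 : 0 ≤ t * (g + t * h) := by nlinarith
      nlinarith
    by_contra hcon
    push_neg at hcon
    set t : ℝ := min 1 (-g / (2 * h + 1)) with ht_def
    have h2h1 : (0:ℝ) < 2 * h + 1 := by linarith
    have ht0 : 0 < t := lt_min one_pos (div_pos (by linarith) h2h1)
    have ht1 : t ≤ 1 := min_le_left _ _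
    have htle : t * (2 * h + 1) ≤ -g := by
      have := min_le_right (1:ℝ) (-g / (2 * h + 1))
      calc t * (2 * h + 1) ≤ -g / (2 * h + 1) * (2 * h + 1) :=
            mul_le_mul_of_nonneg_right this (le_of_lt h2h1)
        _ = -g := by field_simp
    have := key t ht0 ht1
    nlinarith
  refine ⟨Φ, ⟨hΦK, hVI⟩, ?_⟩
  rintro Φ' ⟨hΦ'K, hVI'⟩
  by_contra hne
  have hv : Φ' - Φ ≠ 0 := sub_ne_zero.mpr hne
  have h1 := hVI Φ' hΦ'K
  have h2 := hVI' Φ hΦK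
  have hpos' := hpos _ hv
  have hMsub : M (Φ' - Φ) = M Φ' - M Φ := map_sub M Φ' Φ
  have hexp : ⟪M (Φ' - Φ), Φ' - Φ⟫ = ⟪M Φ', Φ' - Φ⟫ - ⟪M Φ, Φ' - Φ⟫ := by
    rw [hMsub, inner_sub_left]
  have hneg : ⟪M Φ', Φ - Φ'⟫ = -⟪M Φ', Φ' - Φ⟫ := by
    rw [← inner_neg_right, neg_sub]
  have hneg2 : ⟪f, Φ - Φ'⟫ = -⟪f, Φ' - Φ⟫ := by
    rw [← inner_neg_right, neg_sub]
  rw [hneg, hneg2] at h2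
  linarith [hexp ▸ hpos']

/-- Existence and uniqueness of the solution of the algebraic
multi-phase Penrose–Fife saddle point problem: there exist unique `Φ ∈ K` and
`Θ ∈ ℝⁿ` with `⟨AΦ + BᵀΘ − F, V − Φ⟩ ≥ 0` for all `V ∈ K` and `BΦ − CΘ = G`. -/
theorem stmt_0 {m n : ℕ} (hm : 0 < m) (hn : 0 < n)
    (A : EuclideanSpace ℝ (Fin m) →L[ℝ] EuclideanSpace ℝ (Fin m))
    (hAsym : ∀ x y : EuclideanSpace ℝ (Fin m), ⟪A x, y⟫ = ⟪x, A y⟫)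
    (hApos : ∀ x : EuclideanSpace ℝ (Fin m), x ≠ 0 → 0 < ⟪A x, x⟫)
    (B : EuclideanSpace ℝ (Fin m) →L[ℝ] EuclideanSpace ℝ (Fin n))
    (C : EuclideanSpace ℝ (Fin n) →L[ℝ] EuclideanSpace ℝ (Fin n))
    (hCsym : ∀ x y : EuclideanSpace ℝ (Fin n), ⟪C x, y⟫ = ⟪x, C y⟫)
    (hCpos : ∀ x : EuclideanSpace ℝ (Fin n), x ≠ 0 → 0 < ⟪C x, x⟫)
    (F : EuclideanSpace ℝ (Fin m)) (G : EuclideanSpace ℝ (Fin n))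
    (K : Set (EuclideanSpace ℝ (Fin m)))
    (hKne : K.Nonempty) (hKcl : IsClosed K) (hKco : Convex ℝ K) :
    ∃! p : EuclideanSpace ℝ (Fin m) × EuclideanSpace ℝ (Fin n),
      p.1 ∈ K ∧
      (∀ V ∈ K, 0 ≤ ⟪A p.1 + (ContinuousLinearMap.adjoint B) p.2 - F, V - p.1⟫) ∧
      B p.1 - C p.2 = G := by
  haveI : Nontrivial (EuclideanSpace ℝ (Fin m)) :=
    ⟨EuclideanSpace.single ⟨0, hm⟩ 1, 0, by
      intro h
      have := congrArg (fun v : EuclideanSpace ℝ (Fin m) => v ⟨0, hm⟩) h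
      simp [EuclideanSpace.single] at this⟩
  -- C is bijective
  have hCinj : Function.Injective C := by
    intro x y hxy
    by_contra hne
    have hv : x - y ≠ 0 := sub_ne_zero.mpr hne
    have := hCpos _ hv
    rw [map_sub, hxy, sub_self] at this
    simp at this
  have hCbij : Function.Bijective (C : EuclideanSpace ℝ (Fin n) →ₗ[ℝ]
      EuclideanSpace ℝ (Fin n)) :=
    ⟨hCinj, LinearMap.injective_iff_surjective.mp hCinj⟩
  set Ce : EuclideanSpace ℝ (Fin n) ≃ₗ[ℝ] EuclideanSpace ℝ (Fin n) :=
    LinearEquiv.ofBijective _ hCbij with hCe_def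
  have hCe_apply : ∀ x, Ce x = C x := fun _ => rfl
  set Ci : EuclideanSpace ℝ (Fin n) →L[ℝ] EuclideanSpace ℝ (Fin n) :=
    LinearMap.toContinuousLinearMap (Ce.symm : EuclideanSpace ℝ (Fin n) →ₗ[ℝ]
      EuclideanSpace ℝ (Fin n)) with hCi_def
  have hCi_apply : ∀ x, Ci x = Ce.symm x := fun _ => rfl
  have hCCi : ∀ x, C (Ci x) = x := by
    intro x; rw [hCi_apply, ← hCe_apply]; exact Ce.apply_symm_apply x
  have hCiC : ∀ x, Ci (C x) = x := by
    intro x; rw [hCi_apply, ← hCe_apply]; exact Ce.symm_apply_apply x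
  have hCisym : ∀ u v, ⟪Ci u, v⟫ = ⟪u, Ci v⟫ := by
    intro u v
    conv_lhs => rw [← hCCi v]
    rw [← hCsym, hCCi]
  have hCipos : ∀ u, 0 ≤ ⟪Ci u, u⟫ := by
    intro u
    rcases eq_or_ne (Ci u) 0 with h0 | h0
    · rw [h0]; simp
    · have := hCpos (Ci u) h0
      rw [hCsym] at this
      calc (0:ℝ) ≤ ⟪Ci u, C (Ci u)⟫ := le_of_lt this
        _ = ⟪Ci u, u⟫ := by rw [hCCi]
  -- the reduced operator and right-hand side
  set Bt : EuclideanSpace ℝ (Fin n) →L[ℝ] EuclideanSpace ℝ (Fin m) :=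
    ContinuousLinearMap.adjoint B with hBt_def
  set M : EuclideanSpace ℝ (Fin m) →L[ℝ] EuclideanSpace ℝ (Fin m) :=
    A + Bt.comp (Ci.comp B) with hM_def
  have hM_apply : ∀ x, M x = A x + Bt (Ci (B x)) := fun _ => rfl
  set f : EuclideanSpace ℝ (Fin m) := F + Bt (Ci G) with hf_def
  have hMsym : ∀ x y, ⟪M x, y⟫ = ⟪x, M y⟫ := by
    intro x y
    rw [hM_apply, hM_apply, inner_add_left, inner_add_right, hAsym,
      ContinuousLinearMap.adjoint_inner_left, ContinuousLinearMap.adjoint_inner_right,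
      hCisym]
  have hMpos : ∀ x, x ≠ 0 → 0 < ⟪M x, x⟫ := by
    intro x hx
    rw [hM_apply, inner_add_left, ContinuousLinearMap.adjoint_inner_left]
    have := hCipos (B x)
    have := hApos x hx
    linarith
  -- solve the reduced variational inequality
  obtain ⟨Φ, ⟨hΦK, hΦVI⟩, hΦuniq⟩ := vi_existsUnique M hMsym hMpos f K hKne hKcl hKco
  set Θ : EuclideanSpace ℝ (Fin n) := Ci (B Φ - G) with hΘ_def
  -- key vector identity
  have keyvec : ∀ φ : EuclideanSpace ℝ (Fin m),
      A φ + Bt (Ci (B φ - G)) - F = M φ - f := by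
    intro φ
    rw [hM_apply, hf_def, map_sub, map_sub]
    abel
  refine ⟨(Φ, Θ), ⟨hΦK, ?_, ?_⟩, ?_⟩
  · intro V hV
    have := hΦVI V hV
    rw [show (ContinuousLinearMap.adjoint B) Θ = Bt Θ from rfl, hΘ_def, keyvec,
      inner_sub_left]
    linarith
  · show B Φ - C Θ = G
    rw [hΘ_def, hCCi]
    abel
  · rintro ⟨Φ', Θ'⟩ ⟨hΦ'K, hVI', heq'⟩
    have hΘ' : Θ' = Ci (B Φ' - G) := by
      have h1 : C Θ' = B Φ' - G := by
        have := heq'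
        simp only at this
        rw [← this]; abel
      rw [← h1, hCiC]
    have hVI'' : ∀ V ∈ K, 0 ≤ ⟪M Φ', V - Φ'⟫ - ⟪f, V - Φ'⟫ := by
      intro V hV
      have := hVI' V hV
      simp only at this
      rw [show (ContinuousLinearMap.adjoint B) Θ' = Bt Θ' from rfl, hΘ', keyvec,
        inner_sub_left] at this
      linarith
    have hΦ'eq : Φ' = Φ := hΦuniq Φ' ⟨hΦ'K, hVI''⟩
    have hΘ'eq : Θ' = Θ := by rw [hΘ', hΦ'eq, hΘ_def]
    exact Prod.ext hΦ'eq hΘ'eq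
end

section
/- A pair (Φ, Θ) with Φ ∈ K, Θ ∈ ℝ^n solves the algebraic saddle point problem (⟨AΦ + BᵀΘ − F, V − Φ⟩ ≥ 0 for all V ∈ K and BΦ − CΘ = G) if and only if Θ is a global minimizer of the dual functional h over ℝ^n and Φ = Φ(Θ). -/
open scoped RealInnerProductSpace

lemma aux_min_to_VI {m : ℕ}
    (A : EuclideanSpace ℝ (Fin m) →L[ℝ] EuclideanSpace ℝ (Fin m))
    (hAsym : ∀ x y : EuclideanSpace ℝ (Fin m), ⟪A x, y⟫ = ⟪x, A y⟫)
    (hAq : ∀ x : EuclideanSpace ℝ (Fin m), 0 ≤ ⟪A x, x⟫)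
    (g : EuclideanSpace ℝ (Fin m)) (K : Set (EuclideanSpace ℝ (Fin m)))
    (hKco : Convex ℝ K) (Φ₀ : EuclideanSpace ℝ (Fin m)) (hΦ₀ : Φ₀ ∈ K)
    (hmin : ∀ V ∈ K, (1/2 : ℝ) * ⟪A Φ₀, Φ₀⟫ - ⟪g, Φ₀⟫ ≤ (1/2 : ℝ) * ⟪A V, V⟫ - ⟪g, V⟫) :
    ∀ V ∈ K, 0 ≤ ⟪A Φ₀ - g, V - Φ₀⟫ := by
  intro V hV
  set d := V - Φ₀ with hd
  have hcomm : ⟪A d, Φ₀⟫ = ⟪A Φ₀, d⟫ := by rw [hAsym, real_inner_comm]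
  have expand : ∀ t : ℝ,
      (1/2 : ℝ) * ⟪A (Φ₀ + t • d), Φ₀ + t • d⟫ - ⟪g, Φ₀ + t • d⟫
        = ((1/2 : ℝ) * ⟪A Φ₀, Φ₀⟫ - ⟪g, Φ₀⟫) + t * ⟪A Φ₀ - g, d⟫
          + t^2/2 * ⟪A d, d⟫ := by
    intro t
    simp only [map_add, map_smul, inner_add_left, inner_add_right,
      real_inner_smul_left, real_inner_smul_right, inner_sub_left]
    rw [hcomm]; ring
  have key : ∀ t : ℝ, 0 < t → t ≤ 1 → 0 ≤ t * ⟪A Φ₀ - g, d⟫ + t^2/2 * ⟪A d, d⟫ := by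
    intro t ht0 ht1
    have hmem : Φ₀ + t • d ∈ K := by
      have := hKco hΦ₀ hV (by linarith : (0:ℝ) ≤ 1 - t) ht0.le (by ring)
      convert this using 1
      rw [hd]; module
    have := hmin _ hmem
    rw [expand t] at this
    linarith
  by_contra hneg
  push_neg at hneg
  set c := ⟪A Φ₀ - g, d⟫ with hc
  set q := ⟪A d, d⟫ with hq
  have hqnn : 0 ≤ q := hAq d
  set t := min 1 ((-c)/(q+1)) with ht
  have ht0 : 0 < t := lt_min one_pos (div_pos (by linarith) (by linarith))
  have ht1 : t ≤ 1 := min_le_left _ _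
  have htq : t * (q + 1) ≤ -c := by
    have h2 : t ≤ (-c)/(q+1) := min_le_right _ _
    rw [le_div_iff₀ (by linarith)] at h2
    linarith
  have H := key t ht0 ht1
  nlinarith [mul_le_mul_of_nonneg_left htq ht0.le]

lemma aux_two_VI {m : ℕ}
    (A : EuclideanSpace ℝ (Fin m) →L[ℝ] EuclideanSpace ℝ (Fin m))
    (hApos : ∀ x : EuclideanSpace ℝ (Fin m), x ≠ 0 → 0 < ⟪A x, x⟫)
    (g : EuclideanSpace ℝ (Fin m)) (K : Set (EuclideanSpace ℝ (Fin m)))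
    (Φ₁ Φ₂ : EuclideanSpace ℝ (Fin m)) (hΦ₁ : Φ₁ ∈ K) (hΦ₂ : Φ₂ ∈ K)
    (h1 : ∀ V ∈ K, 0 ≤ ⟪A Φ₁ - g, V - Φ₁⟫)
    (h2 : ∀ V ∈ K, 0 ≤ ⟪A Φ₂ - g, V - Φ₂⟫) : Φ₁ = Φ₂ := by
  by_contra hne
  have hd : Φ₁ - Φ₂ ≠ 0 := sub_ne_zero.mpr hne
  have ha := h1 Φ₂ hΦ₂
  have hb := h2 Φ₁ hΦ₁
  have hsum : 0 ≤ ⟪A Φ₁ - g, Φ₂ - Φ₁⟫ + ⟪A Φ₂ - g, Φ₁ - Φ₂⟫ := by linarith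
  have : ⟪A Φ₁ - g, Φ₂ - Φ₁⟫ + ⟪A Φ₂ - g, Φ₁ - Φ₂⟫ = -⟪A (Φ₁ - Φ₂), Φ₁ - Φ₂⟫ := by
    simp only [map_sub, inner_sub_left, inner_sub_right]
    ring
  rw [this] at hsum
  have := hApos _ hd
  linarith

lemma aux_coercive {m : ℕ} (hm : 0 < m)
    (A : EuclideanSpace ℝ (Fin m) →L[ℝ] EuclideanSpace ℝ (Fin m))
    (hApos : ∀ x : EuclideanSpace ℝ (Fin m), x ≠ 0 → 0 < ⟪A x, x⟫) :
    ∃ α > 0, ∀ x : EuclideanSpace ℝ (Fin m), α * ‖x‖ ^ 2 ≤ ⟪A x, x⟫ := by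
  have hne : Nontrivial (EuclideanSpace ℝ (Fin m)) := by
    have : Nonempty (Fin m) := ⟨⟨0, hm⟩⟩
    infer_instance
  obtain ⟨x₁, hx₁⟩ := exists_norm_eq (EuclideanSpace ℝ (Fin m)) (zero_le_one (α := ℝ))
  have hS : IsCompact (Metric.sphere (0 : EuclideanSpace ℝ (Fin m)) 1) :=
    isCompact_sphere _ _
  have hSne : (Metric.sphere (0 : EuclideanSpace ℝ (Fin m)) 1).Nonempty :=
    ⟨x₁, by simpa using hx₁⟩
  have hcont : Continuous fun x : EuclideanSpace ℝ (Fin m) => ⟪A x, x⟫ := by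
    exact (A.continuous.inner continuous_id)
  obtain ⟨x₀, hx₀S, hmin⟩ := hS.exists_isMinOn hSne hcont.continuousOn
  have hx₀norm : ‖x₀‖ = 1 := by simpa using hx₀S
  have hx₀ne : x₀ ≠ 0 := by intro h0; rw [h0] at hx₀norm; simp at hx₀norm
  refine ⟨⟪A x₀, x₀⟫, hApos x₀ hx₀ne, fun x => ?_⟩
  rcases eq_or_ne x 0 with rfl | hx
  · simp
  · have hxn : (0:ℝ) < ‖x‖ := norm_pos_iff.mpr hx
    have hu : (‖x‖⁻¹ • x) ∈ Metric.sphere (0 : EuclideanSpace ℝ (Fin m)) 1 := by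
      simp [norm_smul, abs_of_pos hxn, inv_mul_cancel₀ hxn.ne']
    have hle : ⟪A x₀, x₀⟫ ≤ ⟪A (‖x‖⁻¹ • x), (‖x‖⁻¹ • x)⟫ := hmin hu
    have hval : ⟪A (‖x‖⁻¹ • x), (‖x‖⁻¹ • x)⟫ = ‖x‖⁻¹ * (‖x‖⁻¹ * ⟪A x, x⟫) := by
      rw [map_smul, real_inner_smul_left, real_inner_smul_right]
    rw [hval] at hle
    calc ⟪A x₀, x₀⟫ * ‖x‖ ^ 2 ≤ (‖x‖⁻¹ * (‖x‖⁻¹ * ⟪A x, x⟫)) * ‖x‖ ^ 2 :=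
          mul_le_mul_of_nonneg_right hle (by positivity)
      _ = ⟪A x, x⟫ := by
          have hxx : ‖x‖⁻¹ * ‖x‖ = 1 := inv_mul_cancel₀ hxn.ne'
          linear_combination (‖x‖⁻¹ * ‖x‖ + 1) * ⟪A x, x⟫ * hxx

/-- The Lagrangian `L(V, W) = ½⟨AV, V⟩ − ⟨F, V⟩ + ⟨BV − G, W⟩ − ½⟨CW, W⟩`. -/
noncomputable def Lag {m n : ℕ}
    (A : EuclideanSpace ℝ (Fin m) →L[ℝ] EuclideanSpace ℝ (Fin m))
    (B : EuclideanSpace ℝ (Fin m) →L[ℝ] EuclideanSpace ℝ (Fin n))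
    (C : EuclideanSpace ℝ (Fin n) →L[ℝ] EuclideanSpace ℝ (Fin n))
    (F : EuclideanSpace ℝ (Fin m)) (G : EuclideanSpace ℝ (Fin n))
    (V : EuclideanSpace ℝ (Fin m)) (W : EuclideanSpace ℝ (Fin n)) : ℝ :=
  (1 / 2 : ℝ) * ⟪A V, V⟫ - ⟪F, V⟫ + ⟪B V - G, W⟫ - (1 / 2 : ℝ) * ⟪C W, W⟫

set_option maxHeartbeats 1000000 in
/-- `(Φ, Θ)` with `Φ ∈ K` solves the algebraic saddle point problem
iff `Θ` is a global minimizer of the dual functional `h(W) = −L(Φ(W), W)` and `Φ = Φ(Θ)`,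
where `Φ(W)` is the (unique) minimizer over `K` of `V ↦ ½⟨AV, V⟩ − ⟨F − BᵀW, V⟩`. -/
theorem stmt_2 {m n : ℕ} (hm : 0 < m) (hn : 0 < n)
    (A : EuclideanSpace ℝ (Fin m) →L[ℝ] EuclideanSpace ℝ (Fin m))
    (hAsym : ∀ x y : EuclideanSpace ℝ (Fin m), ⟪A x, y⟫ = ⟪x, A y⟫)
    (hApos : ∀ x : EuclideanSpace ℝ (Fin m), x ≠ 0 → 0 < ⟪A x, x⟫)
    (B : EuclideanSpace ℝ (Fin m) →L[ℝ] EuclideanSpace ℝ (Fin n))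
    (C : EuclideanSpace ℝ (Fin n) →L[ℝ] EuclideanSpace ℝ (Fin n))
    (hCsym : ∀ x y : EuclideanSpace ℝ (Fin n), ⟪C x, y⟫ = ⟪x, C y⟫)
    (hCpos : ∀ x : EuclideanSpace ℝ (Fin n), x ≠ 0 → 0 < ⟪C x, x⟫)
    (F : EuclideanSpace ℝ (Fin m)) (G : EuclideanSpace ℝ (Fin n))
    (K : Set (EuclideanSpace ℝ (Fin m)))
    (hKne : K.Nonempty) (hKcl : IsClosed K) (hKco : Convex ℝ K)
    -- `Phi W` is the minimizer over `K` of `V ↦ ½⟨AV, V⟩ − ⟨F − BᵀW, V⟩`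
    (Phi : EuclideanSpace ℝ (Fin n) → EuclideanSpace ℝ (Fin m))
    (hPhi : ∀ W : EuclideanSpace ℝ (Fin n), Phi W ∈ K ∧ ∀ V ∈ K,
      (1 / 2 : ℝ) * ⟪A (Phi W), Phi W⟫ - ⟪F - (ContinuousLinearMap.adjoint B) W, Phi W⟫ ≤
        (1 / 2 : ℝ) * ⟪A V, V⟫ - ⟪F - (ContinuousLinearMap.adjoint B) W, V⟫)
    -- the dual functional `h(W) = −L(Φ(W), W)`
    (h : EuclideanSpace ℝ (Fin n) → ℝ)
    (hdual : ∀ W : EuclideanSpace ℝ (Fin n), h W = -Lag A B C F G (Phi W) W)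
    (Φ : EuclideanSpace ℝ (Fin m)) (Θ : EuclideanSpace ℝ (Fin n)) :
    (Φ ∈ K ∧
        (∀ V ∈ K, 0 ≤ ⟪A Φ + (ContinuousLinearMap.adjoint B) Θ - F, V - Φ⟫) ∧
        B Φ - C Θ = G) ↔
      ((∀ W : EuclideanSpace ℝ (Fin n), h Θ ≤ h W) ∧ Φ = Phi Θ) := by
  set adjB := ContinuousLinearMap.adjoint B with hadjB
  have hAnn : ∀ x : EuclideanSpace ℝ (Fin m), 0 ≤ ⟪A x, x⟫ := fun x => by
    rcases eq_or_ne x 0 with rfl | hx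
    · simp
    · exact (hApos x hx).le
  have hCnn : ∀ x : EuclideanSpace ℝ (Fin n), 0 ≤ ⟪C x, x⟫ := fun x => by
    rcases eq_or_ne x 0 with rfl | hx
    · simp
    · exact (hCpos x hx).le
  have hadj : ∀ (W : EuclideanSpace ℝ (Fin n)) (V : EuclideanSpace ℝ (Fin m)),
      ⟪adjB W, V⟫ = ⟪B V, W⟫ := fun W V => by
    rw [hadjB, ContinuousLinearMap.adjoint_inner_left, real_inner_comm]
  -- Lagrangian in terms of the quadratic functional J_W
  have hLJ : ∀ (V : EuclideanSpace ℝ (Fin m)) (W : EuclideanSpace ℝ (Fin n)),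
      Lag A B C F G V W
        = ((1 / 2 : ℝ) * ⟪A V, V⟫ - ⟪F - adjB W, V⟫) - ⟪G, W⟫ - (1 / 2 : ℝ) * ⟪C W, W⟫ := by
    intro V W
    simp only [Lag, inner_sub_left]
    rw [hadj W V]
    ring
  -- VI for Phi W
  have hVIPhi : ∀ W : EuclideanSpace ℝ (Fin n), ∀ V ∈ K,
      0 ≤ ⟪A (Phi W) - (F - adjB W), V - Phi W⟫ := fun W =>
    aux_min_to_VI A hAsym hAnn (F - adjB W) K hKco (Phi W) (hPhi W).1 (hPhi W).2
  constructor
  · rintro ⟨hΦK, hVI, heqn⟩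
    -- Φ satisfies the VI for the functional J_Θ
    have hVI' : ∀ V ∈ K, 0 ≤ ⟪A Φ - (F - adjB Θ), V - Φ⟫ := by
      intro V hV
      have := hVI V hV
      have heq : A Φ - (F - adjB Θ) = A Φ + adjB Θ - F := by abel
      rw [heq]; exact this
    have hEq : Φ = Phi Θ :=
      aux_two_VI A hApos (F - adjB Θ) K Φ (Phi Θ) hΦK (hPhi Θ).1 hVI' (hVIPhi Θ)
    refine ⟨fun W => ?_, hEq⟩
    have h1 : Lag A B C F G (Phi W) W ≤ Lag A B C F G Φ W := by
      rw [hLJ, hLJ]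
      have := (hPhi W).2 Φ hΦK
      linarith
    have hBΦ : B Φ - G = C Θ := by rw [← heqn]; abel
    have h2 : Lag A B C F G Φ W ≤ Lag A B C F G Φ Θ := by
      have hCc : ⟪C Θ, W⟫ = ⟪C W, Θ⟫ := by rw [hCsym, real_inner_comm]
      have key : Lag A B C F G Φ Θ - Lag A B C F G Φ W
          = (1 / 2 : ℝ) * ⟪C (Θ - W), Θ - W⟫ := by
        simp only [Lag, hBΦ, map_sub, inner_sub_left, inner_sub_right]
        linarith [hCc]
      linarith [key, hCnn (Θ - W)]
    rw [hdual W, hdual Θ, ← hEq]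
    linarith
  · rintro ⟨hminΘ, hEq⟩
    subst hEq
    refine ⟨(hPhi Θ).1, fun V hV => ?_, ?_⟩
    · have := hVIPhi Θ V hV
      have heq : A (Phi Θ) - (F - adjB Θ) = A (Phi Θ) + adjB Θ - F := by abel
      rw [heq] at this; exact this
    · obtain ⟨α, hα, hcoer⟩ := aux_coercive hm A hApos
      set R := (B (Phi Θ) - C Θ) - G with hR
      have hbound : ∀ t : ℝ, 0 < t →
          α * ⟪R, R⟫ ≤ t * (α / 2 * ⟪C R, R⟫ + ‖B‖ * ‖adjB R‖ * ‖R‖) := by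
        intro t ht
        set W := Θ + t • R with hW
        set Vt := Phi W with hVt
        set e := Vt - Phi Θ with he
        -- Lagrangian comparison
        have hAB : Lag A B C F G Vt W ≤ Lag A B C F G Vt Θ := by
          have hmW := hminΘ W
          rw [hdual W, hdual Θ] at hmW
          have hLth : Lag A B C F G (Phi Θ) Θ ≤ Lag A B C F G Vt Θ := by
            rw [hLJ, hLJ]
            have := (hPhi Θ).2 Vt (hPhi W).1
            linarith
          linarith
        have hCc : ⟪C R, Θ⟫ = ⟪C Θ, R⟫ := by rw [hCsym, real_inner_comm]
        have hexpand : Lag A B C F G Vt W - Lag A B C F G Vt Θ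
            = t * ⟪B Vt - G, R⟫ - t * ⟪C Θ, R⟫ - t ^ 2 / 2 * ⟪C R, R⟫ := by
          simp only [Lag, hW, inner_add_right, inner_add_left, map_add, map_smul,
            real_inner_smul_left, real_inner_smul_right]
          linear_combination (-(t / 2)) * hCc
        have hsplit : ⟪B Vt - G, R⟫ - ⟪C Θ, R⟫ = ⟪R, R⟫ + ⟪B e, R⟫ := by
          have hBe : B Vt - G - C Θ = R + B e := by
            rw [hR, he, map_sub]; abel
          rw [← inner_sub_left, hBe, inner_add_left]
        have hsplit' : t * (⟪B Vt - G, R⟫ - ⟪C Θ, R⟫) = t * (⟪R, R⟫ + ⟪B e, R⟫) := by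
          rw [hsplit]
        have hkey1 : t * (⟪R, R⟫ + ⟪B e, R⟫) ≤ t ^ 2 / 2 * ⟪C R, R⟫ := by
          nlinarith [hAB, hexpand, hsplit']
        -- bound on e via the two variational inequalities
        have v1 := hVIPhi W (Phi Θ) (hPhi Θ).1
        have v2 := hVIPhi Θ Vt (hPhi W).1
        have hid : ⟪A Vt - (F - adjB W), Phi Θ - Vt⟫ + ⟪A (Phi Θ) - (F - adjB Θ), Vt - Phi Θ⟫
            = -⟪A e, e⟫ - t * ⟪adjB R, e⟫ := by
          simp only [he, hW, map_add, map_smul, map_sub, inner_sub_left, inner_sub_right,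
            inner_add_left, inner_add_right, real_inner_smul_left, real_inner_smul_right]
          ring
        have hAe : ⟪A e, e⟫ ≤ t * (‖adjB R‖ * ‖e‖) := by
          have habs := abs_real_inner_le_norm (adjB R) e
          have hge : -(‖adjB R‖ * ‖e‖) ≤ ⟪adjB R, e⟫ := by
            have := neg_abs_le ⟪adjB R, e⟫
            linarith
          nlinarith [v1, v2, hid, hge, ht]
        have heb : α * ‖e‖ ≤ t * ‖adjB R‖ := by
          by_cases h0 : e = 0
          · rw [h0]; simp
            positivity
          · have hepos : 0 < ‖e‖ := norm_pos_iff.mpr h0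
            nlinarith [hcoer e, hAe, hepos]
        -- combine
        have hdiv : ⟪R, R⟫ + ⟪B e, R⟫ ≤ t / 2 * ⟪C R, R⟫ := by
          have h' : t * (⟪R, R⟫ + ⟪B e, R⟫) ≤ t * (t / 2 * ⟪C R, R⟫) := by
            nlinarith [hkey1]
          exact le_of_mul_le_mul_left h' ht
        have habs2 : -(‖B‖ * ‖e‖ * ‖R‖) ≤ ⟪B e, R⟫ := by
          have h1 := abs_real_inner_le_norm (B e) R
          have h2 : ‖B e‖ ≤ ‖B‖ * ‖e‖ := B.le_opNorm e
          have h3 := neg_abs_le ⟪B e, R⟫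
          have h2r := mul_le_mul_of_nonneg_right h2 (norm_nonneg R)
          linarith
        have hstep : α * (‖B‖ * ‖e‖ * ‖R‖) ≤ t * (‖B‖ * ‖adjB R‖ * ‖R‖) := by
          have hh := mul_le_mul_of_nonneg_left heb
            (mul_nonneg (norm_nonneg B) (norm_nonneg R))
          linarith [hh]
        have hdivα := mul_le_mul_of_nonneg_left hdiv hα.le
        have habsα := mul_le_mul_of_nonneg_left habs2 hα.le
        linarith [hdivα, habsα, hstep]
      -- conclude R = 0
      set M := α / 2 * ⟪C R, R⟫ + ‖B‖ * ‖adjB R‖ * ‖R‖ with hM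
      have hMnn : 0 ≤ M := by
        have := hCnn R
        have : 0 ≤ α / 2 * ⟪C R, R⟫ := by positivity
        have : 0 ≤ ‖B‖ * ‖adjB R‖ * ‖R‖ := by positivity
        simp only [hM]
        positivity
      have hRR : ⟪R, R⟫ ≤ 0 := by
        by_contra hpos
        push_neg at hpos
        have ht : 0 < α * ⟪R, R⟫ / (M + 1) := by positivity
        have hb := hbound _ ht
        rw [div_mul_eq_mul_div, le_div_iff₀ (by linarith : (0:ℝ) < M + 1)] at hb
        nlinarith [mul_pos hα hpos]
      have hR0 : R = 0 := by
        have hnn : (0:ℝ) ≤ ⟪R, R⟫ := real_inner_self_nonneg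
        have : ⟪R, R⟫ = 0 := le_antisymm hRR hnn
        exact inner_self_eq_zero.mp this
      have := sub_eq_zero.mp (hR.symm ▸ hR0 : (B (Phi Θ) - C Θ) - G = 0)
      exact this
end

section
/- The gradient of the dual functional h is Lipschitz continuous: for all W₁, W₂ ∈ ℝ^n one has ‖∇h(W₁) − ∇h(W₂)‖ ≤ (‖B‖²/α + ‖C‖) ‖W₁ − W₂‖, where ‖B‖ and ‖C‖ denote operator norms with respect to the Euclidean norm and ∇h(W) = −BΦ(W) + CW + G. -/
open scoped RealInnerProductSpace

set_option maxHeartbeats 1000000 in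
/-- The gradient `∇h(W) = −BΦ(W) + CW + G` of the dual functional is
Lipschitz continuous with constant `‖B‖²/α + ‖C‖`, where `α` is the coercivity constant
of `A` and `Φ(W)` is the minimizer over `K` of `V ↦ ½⟨AV, V⟩ − ⟨F − BᵀW, V⟩`. -/
theorem stmt_4 {m n : ℕ} (hm : 0 < m) (hn : 0 < n)
    (A : EuclideanSpace ℝ (Fin m) →L[ℝ] EuclideanSpace ℝ (Fin m))
    (hAsym : ∀ x y : EuclideanSpace ℝ (Fin m), ⟪A x, y⟫ = ⟪x, A y⟫)
    (α : ℝ) (hα : 0 < α)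
    (hAcoer : ∀ V : EuclideanSpace ℝ (Fin m), α * ‖V‖ ^ 2 ≤ ⟪A V, V⟫)
    (B : EuclideanSpace ℝ (Fin m) →L[ℝ] EuclideanSpace ℝ (Fin n))
    (C : EuclideanSpace ℝ (Fin n) →L[ℝ] EuclideanSpace ℝ (Fin n))
    (hCsym : ∀ x y : EuclideanSpace ℝ (Fin n), ⟪C x, y⟫ = ⟪x, C y⟫)
    (hCpos : ∀ x : EuclideanSpace ℝ (Fin n), x ≠ 0 → 0 < ⟪C x, x⟫)
    (F : EuclideanSpace ℝ (Fin m)) (G : EuclideanSpace ℝ (Fin n))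
    (K : Set (EuclideanSpace ℝ (Fin m)))
    (hKne : K.Nonempty) (hKcl : IsClosed K) (hKco : Convex ℝ K)
    -- `Phi W` is the minimizer over `K` of `V ↦ ½⟨AV, V⟩ − ⟨F − BᵀW, V⟩`
    (Phi : EuclideanSpace ℝ (Fin n) → EuclideanSpace ℝ (Fin m))
    (hPhi : ∀ W : EuclideanSpace ℝ (Fin n), Phi W ∈ K ∧ ∀ V ∈ K,
      (1 / 2 : ℝ) * ⟪A (Phi W), Phi W⟫ - ⟪F - (ContinuousLinearMap.adjoint B) W, Phi W⟫ ≤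
        (1 / 2 : ℝ) * ⟪A V, V⟫ - ⟪F - (ContinuousLinearMap.adjoint B) W, V⟫) :
    ∀ W₁ W₂ : EuclideanSpace ℝ (Fin n),
      ‖(-B (Phi W₁) + C W₁ + G) - (-B (Phi W₂) + C W₂ + G)‖ ≤
        (‖B‖ ^ 2 / α + ‖C‖) * ‖W₁ - W₂‖ := by

  intro W₁ W₂
  -- Variational inequality satisfied by the minimizer
  have hVI : ∀ W : EuclideanSpace ℝ (Fin n), ∀ V ∈ K,
      0 ≤ ⟪A (Phi W) - (F - (ContinuousLinearMap.adjoint B) W), V - Phi W⟫ := by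
    intro W V hV
    set u := Phi W with hu
    set f := F - (ContinuousLinearMap.adjoint B) W with hf
    set d := V - u with hd
    by_contra hneg
    push_neg at hneg
    set c := ⟪A u - f, d⟫ with hc
    have hcneg : c < 0 := hneg
    have hq0 : (0:ℝ) ≤ ⟪A d, d⟫ := le_trans (by positivity) (hAcoer d)
    set q := ⟪A d, d⟫ with hqdef
    set t : ℝ := min 1 ((-c) / (q + 1)) with htdef
    have ht0 : 0 < t := by
      apply lt_min one_pos
      apply div_pos (by linarith) (by linarith)
    have ht1 : t ≤ 1 := min_le_left _ _
    have htq : t ≤ (-c) / (q + 1) := min_le_right _ _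
    have hmem : u + t • d ∈ K := by
      have : u + t • d = (1 - t) • u + t • V := by
        rw [hd]; module
      rw [this]
      exact hKco (hPhi W).1 hV (by linarith) (le_of_lt ht0) (by ring)
    have hmin := (hPhi W).2 (u + t • d) hmem
    rw [← hu, ← hf] at hmin
    have hAdu : ⟪A d, u⟫ = ⟪A u, d⟫ := by rw [hAsym d u, real_inner_comm]
    have hexp : (1/2 : ℝ) * ⟪A (u + t • d), u + t • d⟫ - ⟪f, u + t • d⟫
        = (1/2 : ℝ) * ⟪A u, u⟫ - ⟪f, u⟫ + t * c + t^2 / 2 * q := by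
      simp only [map_add, map_smul, inner_add_left, inner_add_right, inner_smul_left,
        inner_smul_right, hc, hqdef, inner_sub_left, starRingEnd_apply, star_trivial, RCLike.ofReal_real_eq_id, id_eq]
      linear_combination (t/2) * hAdu
    rw [hexp] at hmin
    have h1 : 0 ≤ t * c + t^2/2 * q := by linarith
    have h2 : t * q ≤ -c := by
      calc t * q ≤ ((-c)/(q+1)) * q := by
            apply mul_le_mul_of_nonneg_right htq hq0
        _ ≤ -c := by
            rw [div_mul_eq_mul_div, div_le_iff₀ (by linarith)]
            nlinarith
    nlinarith
  -- apply VI at W₁ and W₂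
  have h1 := hVI W₁ (Phi W₂) (hPhi W₂).1
  have h2 := hVI W₂ (Phi W₁) (hPhi W₁).1
  set u := Phi W₁ with hu
  set v := Phi W₂ with hv
  have hBad : ∀ (W : EuclideanSpace ℝ (Fin n)) (x : EuclideanSpace ℝ (Fin m)),
      ⟪(ContinuousLinearMap.adjoint B) W, x⟫ = ⟪W, B x⟫ :=
    fun W x => ContinuousLinearMap.adjoint_inner_left B x W
  have hkey : ⟪A (u - v), u - v⟫ ≤ ⟪W₂ - W₁, B (u - v)⟫ := by
    have e1 : ⟪A u - (F - (ContinuousLinearMap.adjoint B) W₁), v - u⟫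
        + ⟪A v - (F - (ContinuousLinearMap.adjoint B) W₂), u - v⟫
        = -⟪A (u - v), u - v⟫ + ⟪W₂ - W₁, B (u - v)⟫ := by
      have hsym : ⟪A u, v⟫ = ⟪A v, u⟫ := (hAsym u v).trans (real_inner_comm u (A v)).symm
      simp only [inner_sub_left, inner_sub_right, map_sub, hBad]
      rw [hsym]; ring
    linarith [h1, h2, e1.symm.le, e1.le]
  have hBnn : (0:ℝ) ≤ ‖B‖ := norm_nonneg _
  have hduv : ‖u - v‖ ≤ ‖B‖ / α * ‖W₁ - W₂‖ := by
    have hbd : ⟪W₂ - W₁, B (u - v)⟫ ≤ ‖W₁ - W₂‖ * (‖B‖ * ‖u - v‖) := by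
      calc ⟪W₂ - W₁, B (u - v)⟫ ≤ ‖W₂ - W₁‖ * ‖B (u - v)‖ := real_inner_le_norm _ _
        _ ≤ ‖W₂ - W₁‖ * (‖B‖ * ‖u - v‖) := by
            apply mul_le_mul_of_nonneg_left (B.le_opNorm _) (norm_nonneg _)
        _ = ‖W₁ - W₂‖ * (‖B‖ * ‖u - v‖) := by rw [norm_sub_rev]
    have hco := hAcoer (u - v)
    have : α * ‖u - v‖^2 ≤ ‖W₁ - W₂‖ * (‖B‖ * ‖u - v‖) := by linarith
    rcases eq_or_lt_of_le (norm_nonneg (u - v)) with h | h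
    · rw [← h]; positivity
    · rw [div_mul_eq_mul_div, le_div_iff₀ hα]
      nlinarith
  have heq : (-B u + C W₁ + G) - (-B v + C W₂ + G) = B (v - u) + C (W₁ - W₂) := by
    simp [map_sub]; abel
  rw [heq]
  calc ‖B (v - u) + C (W₁ - W₂)‖ ≤ ‖B (v - u)‖ + ‖C (W₁ - W₂)‖ := norm_add_le _ _
    _ ≤ ‖B‖ * ‖v - u‖ + ‖C‖ * ‖W₁ - W₂‖ := add_le_add (B.le_opNorm _) (C.le_opNorm _)
    _ ≤ ‖B‖ * (‖B‖ / α * ‖W₁ - W₂‖) + ‖C‖ * ‖W₁ - W₂‖ := by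
        have : ‖v - u‖ = ‖u - v‖ := norm_sub_rev _ _
        rw [this]
        exact add_le_add_left (mul_le_mul_of_nonneg_left hduv hBnn) _
    _ = (‖B‖ ^ 2 / α + ‖C‖) * ‖W₁ - W₂‖ := by ring
end

section
/- For every w ∈ ℝ^n there exists a unique x(w) ∈ 𝒲 such that ⟨A x(w), v⟩ = ⟨Bᵀw, v⟩ for all v ∈ 𝒲, and the map S : ℝ^n → ℝ^n defined by S w = B x(w) + C w is linear, symmetric (⟨S w, w'⟩ = ⟨w, S w'⟩ for all w, w' ∈ ℝ^n) and positive definite. -/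
open scoped RealInnerProductSpace

/-- For every `w ∈ ℝⁿ` there is a unique `x(w) ∈ 𝒲` with
`⟨A x(w), v⟩ = ⟨Bᵀw, v⟩` for all `v ∈ 𝒲`, and the generalized Schur complement
`S w = B x(w) + C w` is linear, symmetric and positive definite. -/
theorem stmt_9 {m n : ℕ} (hm : 0 < m) (hn : 0 < n)
    (A : EuclideanSpace ℝ (Fin m) →L[ℝ] EuclideanSpace ℝ (Fin m))
    (hAsym : ∀ x y : EuclideanSpace ℝ (Fin m), ⟪A x, y⟫ = ⟪x, A y⟫)
    (hApos : ∀ x : EuclideanSpace ℝ (Fin m), x ≠ 0 → 0 < ⟪A x, x⟫)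
    (B : EuclideanSpace ℝ (Fin m) →L[ℝ] EuclideanSpace ℝ (Fin n))
    (C : EuclideanSpace ℝ (Fin n) →L[ℝ] EuclideanSpace ℝ (Fin n))
    (hCsym : ∀ x y : EuclideanSpace ℝ (Fin n), ⟪C x, y⟫ = ⟪x, C y⟫)
    (hCpos : ∀ x : EuclideanSpace ℝ (Fin n), x ≠ 0 → 0 < ⟪C x, x⟫)
    (𝒲 : Submodule ℝ (EuclideanSpace ℝ (Fin m)))
    -- `x w` denotes the element of `𝒲` with `⟨A (x w), v⟩ = ⟨Bᵀ w, v⟩` for all `v ∈ 𝒲`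
    (x : EuclideanSpace ℝ (Fin n) → EuclideanSpace ℝ (Fin m))
    (hx : ∀ w : EuclideanSpace ℝ (Fin n), x w ∈ 𝒲 ∧
      ∀ v ∈ 𝒲, ⟪A (x w), v⟫ = ⟪(ContinuousLinearMap.adjoint B) w, v⟫) :
    -- existence and uniqueness of `x(w)`
    (∀ w : EuclideanSpace ℝ (Fin n), ∃! xw : EuclideanSpace ℝ (Fin m),
      xw ∈ 𝒲 ∧ ∀ v ∈ 𝒲, ⟪A xw, v⟫ = ⟪(ContinuousLinearMap.adjoint B) w, v⟫) ∧
    -- `S w = B (x w) + C w` is additive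
    (∀ w w' : EuclideanSpace ℝ (Fin n),
      B (x (w + w')) + C (w + w') = (B (x w) + C w) + (B (x w') + C w')) ∧
    -- `S` is homogeneous
    (∀ (a : ℝ) (w : EuclideanSpace ℝ (Fin n)),
      B (x (a • w)) + C (a • w) = a • (B (x w) + C w)) ∧
    -- `S` is symmetric
    (∀ w w' : EuclideanSpace ℝ (Fin n),
      ⟪B (x w) + C w, w'⟫ = ⟪w, B (x w') + C w'⟫) ∧
    -- `S` is positive definite
    (∀ w : EuclideanSpace ℝ (Fin n), w ≠ 0 → 0 < ⟪B (x w) + C w, w⟫) := by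
  -- uniqueness of solutions to the variational problem
  have key : ∀ (w : EuclideanSpace ℝ (Fin n)) (y : EuclideanSpace ℝ (Fin m)),
      y ∈ 𝒲 → (∀ v ∈ 𝒲, ⟪A y, v⟫ = ⟪(ContinuousLinearMap.adjoint B) w, v⟫) → y = x w := by
    intro w y hymem hy
    by_contra hne
    have hd : y - x w ≠ 0 := sub_ne_zero.mpr hne
    have hdm : y - x w ∈ 𝒲 := Submodule.sub_mem _ hymem (hx w).1
    have h1 := hy _ hdm
    have h2 := (hx w).2 _ hdm
    have hzero : ⟪A (y - x w), y - x w⟫ = 0 := by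
      rw [map_sub, inner_sub_left, h1, h2, sub_self]
    exact absurd hzero (ne_of_gt (hApos _ hd))
  have hBx : ∀ w w' : EuclideanSpace ℝ (Fin n),
      ⟪B (x w), w'⟫ = ⟪A (x w'), x w⟫ := by
    intro w w'
    rw [real_inner_comm, ← ContinuousLinearMap.adjoint_inner_left,
      ← (hx w').2 (x w) (hx w).1]
  refine ⟨?_, ?_, ?_, ?_, ?_⟩
  · intro w
    exact ⟨x w, hx w, fun y hy => key w y hy.1 hy.2⟩
  · intro w w'
    have hxa : x (w + w') = x w + x w' := by
      refine (key (w + w') (x w + x w') (Submodule.add_mem _ (hx w).1 (hx w').1) ?_).symm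
      intro v hv
      rw [map_add, map_add, inner_add_left, inner_add_left,
        (hx w).2 v hv, (hx w').2 v hv]
    rw [hxa, map_add, map_add]
    abel
  · intro a w
    have hxa : x (a • w) = a • x w := by
      refine (key (a • w) (a • x w) (Submodule.smul_mem _ a (hx w).1) ?_).symm
      intro v hv
      rw [map_smul, map_smul, inner_smul_left, inner_smul_left, (hx w).2 v hv]
    rw [hxa, map_smul, map_smul, smul_add]
  · intro w w'
    rw [inner_add_left, inner_add_right, hBx, hCsym]
    congr 1
    have e1 : ⟪w, B (x w')⟫ = ⟪A (x w), x w'⟫ := by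
      rw [real_inner_comm]; exact hBx w' w
    exact ((hAsym (x w') (x w)).trans (real_inner_comm _ _)).trans e1.symm
  · intro w hw
    have h1 : ⟪B (x w), w⟫ = ⟪A (x w), x w⟫ := hBx w w
    have h2 : 0 ≤ ⟪A (x w), x w⟫ := by
      by_cases hxw : x w = 0
      · simp [hxw]
      · exact le_of_lt (hApos _ hxw)
    rw [inner_add_left, h1]
    exact add_pos_of_nonneg_of_pos h2 (hCpos w hw)
end

section
/- The generalized Schur complement satisfies the uniform two-sided bounds ⟨C w, w⟩ ≤ ⟨S w, w⟩ ≤ ⟨C w, w⟩ + (1/α)‖Bᵀw‖² for all w ∈ ℝ^n, where S w = B x(w) + C w and x(w) is the unique element of 𝒲 with ⟨A x(w), v⟩ = ⟨Bᵀw, v⟩ for all v ∈ 𝒲. In particular, these bounds hold uniformly over all linear subspaces 𝒲 ⊆ ℝ^m. -/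
open scoped RealInnerProductSpace

/-- The generalized Schur complement `S w = B x(w) + C w`, where
`x(w) ∈ 𝒲` satisfies `⟨A x(w), v⟩ = ⟨Bᵀw, v⟩` for all `v ∈ 𝒲`, obeys the two-sided
bounds `⟨Cw, w⟩ ≤ ⟨Sw, w⟩ ≤ ⟨Cw, w⟩ + (1/α)‖Bᵀw‖²`, uniformly over all linear
subspaces `𝒲 ⊆ ℝᵐ`. -/
theorem stmt_10 {m n : ℕ} (hm : 0 < m) (hn : 0 < n)
    (A : EuclideanSpace ℝ (Fin m) →L[ℝ] EuclideanSpace ℝ (Fin m))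
    (hAsym : ∀ x y : EuclideanSpace ℝ (Fin m), ⟪A x, y⟫ = ⟪x, A y⟫)
    (α : ℝ) (hα : 0 < α)
    (hAcoer : ∀ V : EuclideanSpace ℝ (Fin m), α * ‖V‖ ^ 2 ≤ ⟪A V, V⟫)
    (B : EuclideanSpace ℝ (Fin m) →L[ℝ] EuclideanSpace ℝ (Fin n))
    (C : EuclideanSpace ℝ (Fin n) →L[ℝ] EuclideanSpace ℝ (Fin n))
    (hCsym : ∀ x y : EuclideanSpace ℝ (Fin n), ⟪C x, y⟫ = ⟪x, C y⟫)
    (hCpos : ∀ x : EuclideanSpace ℝ (Fin n), x ≠ 0 → 0 < ⟪C x, x⟫) :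
    ∀ (𝒲 : Submodule ℝ (EuclideanSpace ℝ (Fin m)))
      (x : EuclideanSpace ℝ (Fin n) → EuclideanSpace ℝ (Fin m)),
      (∀ w : EuclideanSpace ℝ (Fin n), x w ∈ 𝒲 ∧
        ∀ v ∈ 𝒲, ⟪A (x w), v⟫ = ⟪(ContinuousLinearMap.adjoint B) w, v⟫) →
      ∀ w : EuclideanSpace ℝ (Fin n),
        ⟪C w, w⟫ ≤ ⟪B (x w) + C w, w⟫ ∧
        ⟪B (x w) + C w, w⟫ ≤ ⟪C w, w⟫ + (1 / α) * ‖(ContinuousLinearMap.adjoint B) w‖ ^ 2 := by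
  intro 𝒲 x hx w
  obtain ⟨hmem, heq⟩ := hx w
  set u := x w with hu
  have hAu : ⟪A u, u⟫ = ⟪(ContinuousLinearMap.adjoint B) w, u⟫ := heq u hmem
  have hadj : ⟪(ContinuousLinearMap.adjoint B) w, u⟫ = ⟪B u, w⟫ := by
    rw [ContinuousLinearMap.adjoint_inner_left, real_inner_comm]
  have key : ⟪B u, w⟫ = ⟪A u, u⟫ := by rw [hAu, hadj]
  have hnn : (0:ℝ) ≤ ⟪A u, u⟫ := le_trans (by positivity) (hAcoer u)
  have hexp : ⟪B u + C w, w⟫ = ⟪B u, w⟫ + ⟪C w, w⟫ := inner_add_left _ _ _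
  set r := ‖(ContinuousLinearMap.adjoint B) w‖ with hr
  have hrnn : (0:ℝ) ≤ r := norm_nonneg _
  have h1 : α * ‖u‖ ^ 2 ≤ r * ‖u‖ := by
    calc α * ‖u‖ ^ 2 ≤ ⟪A u, u⟫ := hAcoer u
    _ = ⟪(ContinuousLinearMap.adjoint B) w, u⟫ := hAu
    _ ≤ r * ‖u‖ := real_inner_le_norm _ _
  have h2 : ⟪B u, w⟫ ≤ r * ‖u‖ := by
    rw [key, hAu]; exact real_inner_le_norm _ _
  have hub : α * ⟪B u, w⟫ ≤ r ^ 2 := by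
    nlinarith [sq_nonneg (r - α * ‖u‖), norm_nonneg u, sq_nonneg ‖u‖]
  constructor
  · rw [hexp, key]; linarith
  · rw [hexp]
    have : ⟪B u, w⟫ ≤ (1 / α) * r ^ 2 := by
      rw [div_mul_eq_mul_div, le_div_iff₀ hα, one_mul, mul_comm]
      exact hub
    linarith
end
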